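/- Let R be a commutative ring with unity in which every non-Jacobson element is contained in only finitely many maximal ideals. Let k ∈ ℕ and I_0,I_1,…,I_k be mutually co-maximal ideals of R; moreover, if exactly one of the I_j (0 ≤ j ≤ k) is a proper ideal, assume additionally that this proper ideal is contained in only finitely many maximal ideals. Let m^i_j ∈ ℕ for 0 ≤ i,j ≤ k. Then the row map SL_{k+1}(R) → ∏_{i=0}^{k} PF^{k,(m^i_0,…,m^i_k)}_{I_i} is surjective. -/

import Mathlib

/-- A vector `(a_0, …, a_k) ∈ R^{k+1}` is unital if `(a_0) + (a_1) + ⋯ + (a_k) = R`. -/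
def IsUnitalVector {R : Type*} [CommRing R] {n : ℕ} (v : Fin n → R) : Prop :=
  ∑ i, Ideal.span {v i} = ⊤

/-- The relation `∼^{k,(m_0,…,m_k)}_I` on unital vectors:
`(a_i) ∼ (b_i)` iff there is `λ ∈ R`, a unit modulo `I`, with `a_i ≡ λ^{m_i} b_i mod I`
for all `i`.  (When `I = ⊤` this relation is total, matching the convention that the
generalized projective space of the unit ideal is a single point.) -/
def ProjRel (R : Type*) [CommRing R] {n : ℕ} (m : Fin n → ℕ) (I : Ideal R)
    (a b : {v : Fin n → R // IsUnitalVector v}) : Prop :=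
  ∃ lam : R, IsUnit (Ideal.Quotient.mk I lam) ∧ ∀ i, a.1 i - lam ^ m i * b.1 i ∈ I

/-- The generalized projective space `PF^{k,(m_0,…,m_k)}_I`: the quotient of the set of
unital `(k+1)`-vectors by the relation `∼^{k,(m_0,…,m_k)}_I`. -/
def GenProjSpace (R : Type*) [CommRing R] {n : ℕ} (m : Fin n → ℕ) (I : Ideal R) :=
  Quot (ProjRel R m I)


section RowMapHelpers

open Matrix Finset

variable {R : Type*} [CommRing R] {S : Type*} [CommRing S]
variable {ι : Type*} [Fintype ι] [DecidableEq ι]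

lemma sum_span_le {n : ℕ} {v : Fin n → R} {M : Ideal R} (h : ∀ j, v j ∈ M) :
    ∑ j, Ideal.span {v j} ≤ M := by
  refine Finset.sum_induction _ (fun N => N ≤ M) (fun a b ha hb => ?_) bot_le
    (fun j _ => (Ideal.span_le).2 (by simpa using h j))
  rw [Submodule.add_eq_sup]; exact sup_le ha hb

lemma isUnit_mk {I : Ideal R} {u : R}
    (h : ∀ M : Ideal R, M.IsMaximal → I ≤ M → u ∉ M) :
    IsUnit (Ideal.Quotient.mk I u) := by
  by_contra hu
  obtain ⟨𝔪, h𝔪, hmem⟩ := exists_max_ideal_of_mem_nonunits (mem_nonunits_iff.2 hu)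
  have hmax := Ideal.comap_isMaximal_of_surjective (Ideal.Quotient.mk I)
    Ideal.Quotient.mk_surjective (K := 𝔪)
  exact h _ hmax
    (fun x hx => by
      simp only [Ideal.mem_comap, Ideal.Quotient.eq_zero_iff_mem.2 hx]
      exact 𝔪.zero_mem) hmem

lemma lemA {n : ℕ} (i : Fin n) (J' : Ideal R) (v : Fin n → R) {F : Set (Ideal R)}
    (hF : F.Finite)
    (hmax : ∀ M ∈ F, Ideal.IsMaximal M) (hJ' : ∀ M ∈ F, ¬ J' ≤ M)
    (hv : ∀ M ∈ F, ∃ j, v j ∉ M) :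
    ∃ t : Fin n → R, (∀ j, t j ∈ J') ∧
      ∀ M ∈ F, v i + ∑ j ∈ Finset.univ.erase i, t j * v j ∉ M := by
  classical
  revert hmax hJ' hv
  refine Set.Finite.induction_on _ hF ?_ ?_
  · exact fun _ _ _ => ⟨0, fun j => J'.zero_mem, fun M hM => absurd hM (Set.notMem_empty M)⟩
  · rintro M₀ F hM₀F hFfin IH hmax hJ' hv
    obtain ⟨t, htJ, htF⟩ := IH (fun M hM => hmax M (Set.mem_insert_of_mem _ hM))
      (fun M hM => hJ' M (Set.mem_insert_of_mem _ hM))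
      (fun M hM => hv M (Set.mem_insert_of_mem _ hM))
    set u := v i + ∑ j ∈ Finset.univ.erase i, t j * v j with hu
    have hM₀max : M₀.IsMaximal := hmax M₀ (Set.mem_insert _ _)
    by_cases hcase : u ∈ M₀
    · -- find j₀ ≠ i with v j₀ ∉ M₀
      have hex : ∃ j₀, j₀ ≠ i ∧ v j₀ ∉ M₀ := by
        by_contra hall
        push_neg at hall
        have hsum : ∑ j ∈ Finset.univ.erase i, t j * v j ∈ M₀ :=
          Ideal.sum_mem _ fun j hj =>
            M₀.mul_mem_left _ (hall j (Finset.ne_of_mem_erase hj))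
        have hvi : v i ∈ M₀ := by
          have := M₀.sub_mem hcase hsum
          simpa [hu] using this
        obtain ⟨j, hj⟩ := hv M₀ (Set.mem_insert _ _)
        rcases eq_or_ne j i with rfl | hne
        · exact hj hvi
        · exact hj (hall j hne)
      obtain ⟨j₀, hj₀i, hj₀⟩ := hex
      have hPle : ¬ (J' * ∏ M ∈ hFfin.toFinset, M) ≤ M₀ := by
        intro hle
        rcases (Ideal.IsPrime.mul_le hM₀max.isPrime).1 hle with h | h
        · exact hJ' M₀ (Set.mem_insert _ _) h
        · obtain ⟨M, hM, hMle⟩ := (Ideal.IsPrime.prod_le hM₀max.isPrime).1 h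
          have hMF : M ∈ F := hFfin.mem_toFinset.1 hM
          have : M = M₀ := (hmax M (Set.mem_insert_of_mem _ hMF)).eq_of_le
            hM₀max.ne_top hMle
          exact hM₀F (this ▸ hMF)
      obtain ⟨c, hcP, hcM₀⟩ := SetLike.not_le_iff_exists.1 hPle
      have hcJ' : c ∈ J' := Ideal.mul_le_left hcP
      have hcF : ∀ M ∈ F, c ∈ M := fun M hM =>
        (Ideal.mul_le_right.trans (Ideal.prod_le_inf.trans
          (Finset.inf_le (hFfin.mem_toFinset.2 hM)))) hcP
      refine ⟨fun j => t j + if j = j₀ then c else 0,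
        fun j => J'.add_mem (htJ j) (by split <;> simp [hcJ', J'.zero_mem]), ?_⟩
      have hkey : v i + ∑ j ∈ Finset.univ.erase i, (t j + if j = j₀ then c else 0) * v j
          = u + c * v j₀ := by
        have h1 : ∀ j ∈ Finset.univ.erase i,
            (t j + if j = j₀ then c else 0) * v j
              = t j * v j + (if j = j₀ then c * v j else 0) := by
          intro j _
          rcases eq_or_ne j j₀ with rfl | hne
          · simp [add_mul]
          · simp [hne]
        rw [Finset.sum_congr rfl h1, Finset.sum_add_distrib]
        have hj₀mem : j₀ ∈ Finset.univ.erase i := Finset.mem_erase.2 ⟨hj₀i, Finset.mem_univ _⟩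
        rw [Finset.sum_ite_eq' _ j₀ (fun j => c * v j), if_pos hj₀mem, hu]
        ring
      intro M hM
      rw [hkey]
      rcases Set.mem_insert_iff.1 hM with rfl | hMF
      · intro hmem
        have : c * v j₀ ∈ M := by
          have h2 := M.sub_mem hmem hcase
          simpa using h2
        rcases hM₀max.isPrime.mem_or_mem this with h | h
        · exact hcM₀ h
        · exact hj₀ h
      · intro hmem
        have : u ∈ M := by
          have h3 : c * v j₀ ∈ M := M.mul_mem_right _ (hcF M hMF)
          have h4 := M.sub_mem hmem h3
          simpa using h4
        exact htF M hMF this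
    · exact ⟨t, htJ, fun M hM => by
        rcases Set.mem_insert_iff.1 hM with rfl | hMF
        · exact hcase
        · exact htF M hMF⟩

lemma key_insertX (i a : ι) (hai : a ≠ i) (s : Finset ι) (ha : a ∉ s) (c : ι → R) :
    (1 : Matrix ι ι R) + ∑ j ∈ insert a s, Matrix.single i j (c j)
      = transvection i a (c a) * ((1 : Matrix ι ι R) + ∑ j ∈ s, Matrix.single i j (c j)) := by
  rw [Finset.sum_insert ha, transvection, add_mul, one_mul, mul_add, mul_one, Finset.mul_sum]
  have hz : ∀ j ∈ s, Matrix.single i a (c a) * Matrix.single i j (c j) = 0 :=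
    fun j _ => Matrix.single_mul_single_of_ne _ _ _ _ hai _
  rw [Finset.sum_congr rfl hz, Finset.sum_const_zero]
  abel

lemma detX (i : ι) (s : Finset ι) (hs : ∀ j ∈ s, j ≠ i) (c : ι → R) :
    ((1 : Matrix ι ι R) + ∑ j ∈ s, Matrix.single i j (c j)).det = 1 := by
  classical
  induction s using Finset.induction_on with
  | empty => simp
  | insert a s' ha ih =>
    have hai : a ≠ i := hs a (Finset.mem_insert_self _ _)
    rw [key_insertX i a hai s' ha c, det_mul,
      det_transvection_of_ne i a (Ne.symm hai),
      ih (fun j hj => hs j (Finset.mem_insert_of_mem hj)), one_mul]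

lemma key_insertY (i a : ι) (hai : a ≠ i) (s : Finset ι) (ha : a ∉ s)
    (hs : ∀ j ∈ s, j ≠ i) (c : ι → R) :
    (1 : Matrix ι ι R) + ∑ j ∈ insert a s, Matrix.single j i (c j)
      = transvection a i (c a) * ((1 : Matrix ι ι R) + ∑ j ∈ s, Matrix.single j i (c j)) := by
  rw [Finset.sum_insert ha, transvection, add_mul, one_mul, mul_add, mul_one, Finset.mul_sum]
  have hz : ∀ j ∈ s, Matrix.single a i (c a) * Matrix.single j i (c j) = 0 :=
    fun j hj => Matrix.single_mul_single_of_ne _ _ _ _ (Ne.symm (hs j hj)) _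
  rw [Finset.sum_congr rfl hz, Finset.sum_const_zero]
  abel

lemma detY (i : ι) (s : Finset ι) (hs : ∀ j ∈ s, j ≠ i) (c : ι → R) :
    ((1 : Matrix ι ι R) + ∑ j ∈ s, Matrix.single j i (c j)).det = 1 := by
  classical
  induction s using Finset.induction_on with
  | empty => simp
  | insert a s' ha ih =>
    have hai : a ≠ i := hs a (Finset.mem_insert_self _ _)
    have hs' : ∀ j ∈ s', j ≠ i := fun j hj => hs j (Finset.mem_insert_of_mem hj)
    rw [key_insertY i a hai s' ha hs' c, det_mul,
      det_transvection_of_ne a i hai, ih hs', one_mul]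

lemma rowX (W : Matrix ι ι R) (i0 : ι) (s : Finset ι) (c : ι → R) (r j : ι) :
    (W * ((1 : Matrix ι ι R) + ∑ l ∈ s, Matrix.single i0 l (c l))) r j
      = W r j + (if j ∈ s then W r i0 * c j else 0) := by
  rw [mul_add, mul_one, Matrix.add_apply]
  congr 1
  rw [Matrix.mul_sum, Matrix.sum_apply]
  have h1 : ∀ l ∈ s, (W * Matrix.single i0 l (c l)) r j
      = if j = l then W r i0 * c j else 0 := by
    intro l _
    rcases eq_or_ne j l with rfl | h
    · simp
    · simp [h]
  rw [Finset.sum_congr rfl h1, Finset.sum_ite_eq s j (fun _ => W r i0 * c j)]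

lemma rowY (W : Matrix ι ι R) (i0 : ι) (s : Finset ι) (c : ι → R) (r j : ι) :
    (W * ((1 : Matrix ι ι R) + ∑ l ∈ s, Matrix.single l i0 (c l))) r j
      = W r j + (if j = i0 then ∑ l ∈ s, W r l * c l else 0) := by
  rw [mul_add, mul_one, Matrix.add_apply]
  congr 1
  rw [Matrix.mul_sum, Matrix.sum_apply]
  rcases eq_or_ne j i0 with rfl | h
  · simp
  · simp [h]

lemma map_stdBasis (f : R →+* S) (a b : ι) (c : R) :
    (Matrix.single a b c).map f = Matrix.single a b (f c) := by
  ext x y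
  simp [Matrix.single_apply, Matrix.map_apply, apply_ite f]

lemma map_transvection (f : R →+* S) (a b : ι) (c : R) :
    (transvection a b c).map f = transvection a b (f c) := by
  rw [transvection, transvection, ← map_stdBasis f]
  ext x y
  simp [Matrix.map_apply, Matrix.one_apply, Matrix.single_apply, apply_ite f]

lemma map_onePlusSum (f : R →+* S) (s : Finset ι) (g h : ι → ι) (c : ι → R) :
    ((1 : Matrix ι ι R) + ∑ l ∈ s, Matrix.single (g l) (h l) (c l)).map f
      = (1 : Matrix ι ι S) + ∑ l ∈ s, Matrix.single (g l) (h l) (f (c l)) := by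
  have : ((1 : Matrix ι ι R) + ∑ l ∈ s, Matrix.single (g l) (h l) (c l)).map f
      = f.mapMatrix ((1 : Matrix ι ι R) + ∑ l ∈ s, Matrix.single (g l) (h l) (c l)) := rfl
  rw [this, map_add, map_sum]
  congr 1
  · exact _root_.map_one f.mapMatrix
  · exact Finset.sum_congr rfl fun l _ => map_stdBasis f _ _ _

lemma row_formula (i p : ι) (hip : i ≠ p) (u z : S) (hz : z * u = 1) (v t : ι → S)
    (hu : u = v i + ∑ j ∈ Finset.univ.erase i, t j * v j) (j : ι) :
    (transvection i p (1 : S) * transvection p i (u - 1) * transvection i p (-z)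
      * ((1 : Matrix ι ι S) + ∑ l ∈ Finset.univ.erase i, Matrix.single i l (z * v l))
      * ((1 : Matrix ι ι S) + ∑ l ∈ Finset.univ.erase i, Matrix.single l i (-(t l)))) i j
      = v j := by
  have e1 : ∀ q, (transvection i p (1 : S)) i q
      = if q = i then 1 else if q = p then 1 else 0 := by
    intro q
    rw [transvection, Matrix.add_apply, Matrix.one_apply, Matrix.single]
    by_cases h1 : q = i
    · by_cases h2 : q = p
      · exact absurd (h1.symm.trans h2) hip
      · simp [h1, h2, hip, Ne.symm hip]
    · by_cases h2 : q = p
      · simp [h1, h2, Ne.symm h1, hip, Ne.symm hip]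
      · simp [h1, h2, Ne.symm h1, Ne.symm h2]
  have e2 : ∀ q, (transvection i p (1 : S) * transvection p i (u - 1)) i q
      = if q = i then u else if q = p then 1 else 0 := by
    intro q
    by_cases h1 : q = i
    · subst h1
      rw [mul_transvection_apply_same, e1, e1]
      simp [hip, Ne.symm hip]
    · rw [mul_transvection_apply_of_ne _ _ _ _ h1, e1]
      simp [h1]
  have e3 : ∀ q, (transvection i p (1 : S) * transvection p i (u - 1)
        * transvection i p (-z)) i q
      = if q = i then u else 0 := by
    intro q
    by_cases h2 : q = p
    · subst h2
      rw [mul_transvection_apply_same, e2, e2]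
      simp [hip, Ne.symm hip]
      linear_combination -hz
    · rw [mul_transvection_apply_of_ne _ _ _ _ h2, e2]
      by_cases h1 : q = i
      · simp [h1]
      · simp [h1, h2]
  have e4 : ∀ q, (transvection i p (1 : S) * transvection p i (u - 1) * transvection i p (-z)
      * ((1 : Matrix ι ι S) + ∑ l ∈ Finset.univ.erase i, Matrix.single i l (z * v l))) i q
      = if q = i then u else v q := by
    intro q
    rw [rowX, e3, e3]
    by_cases h1 : q = i
    · simp [h1]
    · have hmem : q ∈ Finset.univ.erase i := Finset.mem_erase.2 ⟨h1, Finset.mem_univ _⟩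
      simp [h1, hmem]
      linear_combination v q * hz
  rw [rowY]
  simp only [e4]
  by_cases h1 : j = i
  · subst h1
    simp only [if_pos rfl]
    have hsum : ∀ l ∈ Finset.univ.erase j,
        (if l = j then u else v l) * (-(t l)) = -(t l * v l) := by
      intro l hl
      rw [if_neg (Finset.mem_erase.1 hl).1]
      ring
    rw [Finset.sum_congr rfl hsum, Finset.sum_neg_distrib, hu]
    simp
    ring
  · simp [h1]

/-- The completion lemma: a unital-enough vector is, modulo `I`, the `i`-th row of a
matrix of determinant one which is `≡ 1` modulo `J'`. -/
lemma completion {n : ℕ} (i p : Fin n) (hip : i ≠ p) (I J' : Ideal R)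
    (hIJ : I + J' = ⊤)
    (hF : {M : Ideal R | M.IsMaximal ∧ I ≤ M}.Finite)
    (a : Fin n → R)
    (hva : ∀ M : Ideal R, M.IsMaximal → I ≤ M → ∃ j, a j ∉ M) :
    ∃ B : Matrix (Fin n) (Fin n) R, B.det = 1 ∧
      (∀ j l, B j l - (1 : Matrix (Fin n) (Fin n) R) j l ∈ J') ∧
      (∀ j, B i j - a j ∈ I) := by
  classical
  -- decompose 1
  have h1mem : (1 : R) ∈ I ⊔ J' := by
    rw [← Submodule.add_eq_sup, hIJ]; exact Submodule.mem_top
  obtain ⟨α, hα, e, he, hαe⟩ := Submodule.mem_sup.1 h1mem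
  have h1e : 1 - e ∈ I := by
    have : 1 - e = α := by linear_combination -hαe
    rw [this]; exact hα
  have he1 : e - 1 ∈ I := by
    have : e - 1 = -(1 - e) := by ring
    rw [this]; exact I.neg_mem h1e
  set w : Fin n → R := fun j => a j * e + (if j = i then 1 - e else 0) with hw
  have hwI : ∀ j, w j - a j ∈ I := by
    intro j
    have : w j - a j = a j * (e - 1) + (if j = i then 1 - e else 0) := by
      simp only [hw]; ring
    rw [this]
    refine I.add_mem (I.mul_mem_left _ he1) ?_
    split
    · exact h1e
    · exact I.zero_mem
  have hwJ : ∀ j, j ≠ i → w j ∈ J' := by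
    intro j hj
    simp only [hw, if_neg hj, add_zero]
    exact J'.mul_mem_left _ he
  have hwiJ : w i - 1 ∈ J' := by
    have hwi : w i = a i * e + (1 - e) := by simp [hw]
    have : w i - 1 = (a i - 1) * e := by rw [hwi]; ring
    rw [this]; exact J'.mul_mem_left _ he
  -- apply lemA
  have hmax : ∀ M ∈ {M : Ideal R | M.IsMaximal ∧ I ≤ M}, Ideal.IsMaximal M := fun M hM => hM.1
  have hJ'M : ∀ M ∈ {M : Ideal R | M.IsMaximal ∧ I ≤ M}, ¬ J' ≤ M := by
    rintro M ⟨hM, hIM⟩ hle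
    exact hM.ne_top ((Ideal.eq_top_iff_one M).2 (hαe ▸ M.add_mem (hIM hα) (hle he)))
  have hv : ∀ M ∈ {M : Ideal R | M.IsMaximal ∧ I ≤ M}, ∃ j, w j ∉ M := by
    rintro M ⟨hM, hIM⟩
    obtain ⟨j, hj⟩ := hva M hM hIM
    refine ⟨j, fun hmem => hj ?_⟩
    have h2 := M.sub_mem hmem (hIM (hwI j))
    simpa using h2
  obtain ⟨t, htJ, htu⟩ := lemA i J' w hF hmax hJ'M hv
  set u : R := w i + ∑ j ∈ Finset.univ.erase i, t j * w j with hu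
  have hUnit : IsUnit (Ideal.Quotient.mk I u) :=
    isUnit_mk (fun M hM hle => htu M ⟨hM, hle⟩)
  have huJ : u - 1 ∈ J' := by
    have : u - 1 = (w i - 1) + ∑ j ∈ Finset.univ.erase i, t j * w j := by
      simp only [hu]; ring
    rw [this]
    exact J'.add_mem hwiJ (Ideal.sum_mem _ fun j _ => J'.mul_mem_right _ (htJ j))
  obtain ⟨z₀, hz₀⟩ : ∃ z₀, z₀ * u - 1 ∈ I := by
    obtain ⟨v0, hv0⟩ := Ideal.Quotient.mk_surjective (↑hUnit.unit⁻¹ : R ⧸ I)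
    refine ⟨v0, ?_⟩
    rw [← Ideal.Quotient.eq]
    rw [_root_.map_mul, hv0, _root_.map_one]
    have hinv := hUnit.unit.inv_mul
    rw [hUnit.unit_spec] at hinv
    exact hinv
  set z : R := z₀ * e + (1 - e) with hz
  have hzI : z * u - 1 ∈ I := by
    have hzz0 : z - z₀ ∈ I := by
      have : z - z₀ = z₀ * (e - 1) + (1 - e) := by simp only [hz]; ring
      rw [this]; exact I.add_mem (I.mul_mem_left _ he1) h1e
    have : z * u - 1 = (z - z₀) * u + (z₀ * u - 1) := by ring
    rw [this]; exact I.add_mem (I.mul_mem_right _ hzz0) hz₀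
  have hzJ : z - 1 ∈ J' := by
    have : z - 1 = (z₀ - 1) * e := by simp only [hz]; ring
    rw [this]; exact J'.mul_mem_left _ he
  -- the matrix
  set B : Matrix (Fin n) (Fin n) R :=
    transvection i p (1 : R) * transvection p i (u - 1) * transvection i p (-z)
      * ((1 : Matrix (Fin n) (Fin n) R)
          + ∑ l ∈ Finset.univ.erase i, Matrix.single i l (z * w l))
      * ((1 : Matrix (Fin n) (Fin n) R)
          + ∑ l ∈ Finset.univ.erase i, Matrix.single l i (-(t l))) with hB
  have herase : ∀ j ∈ Finset.univ.erase i, j ≠ i := fun j hj => (Finset.mem_erase.1 hj).1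
  have hdet : B.det = 1 := by
    rw [hB, det_mul, det_mul, det_mul, det_mul,
      det_transvection_of_ne i p hip, det_transvection_of_ne p i (Ne.symm hip),
      det_transvection_of_ne i p hip, detX i _ herase, detY i _ herase]
    norm_num
  refine ⟨B, hdet, ?_, ?_⟩
  · -- congruence mod J'
    have hφB : (Ideal.Quotient.mk J').mapMatrix B = 1 := by
      rw [hB, _root_.map_mul, _root_.map_mul, _root_.map_mul, _root_.map_mul]
      have h1 : (Ideal.Quotient.mk J').mapMatrix (transvection i p (1 : R))
          = transvection i p (1 : R ⧸ J') := by
        rw [RingHom.mapMatrix_apply, map_transvection, _root_.map_one]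
      have h2 : (Ideal.Quotient.mk J').mapMatrix (transvection p i (u - 1))
          = (1 : Matrix (Fin n) (Fin n) (R ⧸ J')) := by
        rw [RingHom.mapMatrix_apply, map_transvection,
          Ideal.Quotient.eq_zero_iff_mem.2 huJ, transvection_zero]
      have h3 : (Ideal.Quotient.mk J').mapMatrix (transvection i p (-z))
          = transvection i p (-1 : R ⧸ J') := by
        rw [RingHom.mapMatrix_apply, map_transvection, map_neg]
        congr 1
        have : Ideal.Quotient.mk J' z = Ideal.Quotient.mk J' 1 := Ideal.Quotient.eq.2 hzJ
        rw [this, _root_.map_one]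
      have h4 : (Ideal.Quotient.mk J').mapMatrix
          ((1 : Matrix (Fin n) (Fin n) R)
            + ∑ l ∈ Finset.univ.erase i, Matrix.single i l (z * w l))
          = (1 : Matrix (Fin n) (Fin n) (R ⧸ J')) := by
        rw [RingHom.mapMatrix_apply, _root_.map_onePlusSum (g := fun _ => i) (h := fun l => l)]
        have hzero : ∀ l ∈ Finset.univ.erase i,
            Matrix.single i l (Ideal.Quotient.mk J' (z * w l))
              = (0 : Matrix (Fin n) (Fin n) (R ⧸ J')) := by
          intro l hl
          rw [Ideal.Quotient.eq_zero_iff_mem.2 (J'.mul_mem_left _ (hwJ l (herase l hl))),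
            Matrix.single_zero]
        rw [Finset.sum_congr rfl hzero, Finset.sum_const_zero, add_zero]
      have h5 : (Ideal.Quotient.mk J').mapMatrix
          ((1 : Matrix (Fin n) (Fin n) R)
            + ∑ l ∈ Finset.univ.erase i, Matrix.single l i (-(t l)))
          = (1 : Matrix (Fin n) (Fin n) (R ⧸ J')) := by
        rw [RingHom.mapMatrix_apply, _root_.map_onePlusSum (g := fun l => l) (h := fun _ => i)]
        have hzero : ∀ l ∈ Finset.univ.erase i,
            Matrix.single l i (Ideal.Quotient.mk J' (-(t l)))
              = (0 : Matrix (Fin n) (Fin n) (R ⧸ J')) := by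
          intro l _
          rw [Ideal.Quotient.eq_zero_iff_mem.2 (J'.neg_mem (htJ l)), Matrix.single_zero]
        rw [Finset.sum_congr rfl hzero, Finset.sum_const_zero, add_zero]
      rw [h1, h2, h3, h4, h5, mul_one, mul_one, mul_one,
        transvection_mul_transvection_same _ _ hip]
      norm_num
    intro j l
    have hent := congrFun (congrFun hφB j) l
    rw [RingHom.mapMatrix_apply, Matrix.map_apply] at hent
    have hone : (1 : Matrix (Fin n) (Fin n) (R ⧸ J')) j l
        = Ideal.Quotient.mk J' ((1 : Matrix (Fin n) (Fin n) R) j l) := by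
      by_cases hjl : j = l <;> simp [Matrix.one_apply, hjl]
    rw [hone] at hent
    exact Ideal.Quotient.eq.1 hent
  · -- row congruence mod I
    intro j
    have expand : (Ideal.Quotient.mk I).mapMatrix B
        = transvection i p (1 : R ⧸ I)
          * transvection p i (Ideal.Quotient.mk I u - 1)
          * transvection i p (-(Ideal.Quotient.mk I z))
          * ((1 : Matrix (Fin n) (Fin n) (R ⧸ I)) + ∑ l ∈ Finset.univ.erase i,
              Matrix.single i l (Ideal.Quotient.mk I z * Ideal.Quotient.mk I (w l)))
          * ((1 : Matrix (Fin n) (Fin n) (R ⧸ I)) + ∑ l ∈ Finset.univ.erase i,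
              Matrix.single l i (-(Ideal.Quotient.mk I (t l)))) := by
      have e1 : (Ideal.Quotient.mk I).mapMatrix (transvection i p (1 : R))
          = transvection i p (1 : R ⧸ I) := by
        rw [RingHom.mapMatrix_apply, map_transvection, _root_.map_one]
      have e2 : (Ideal.Quotient.mk I).mapMatrix (transvection p i (u - 1))
          = transvection p i (Ideal.Quotient.mk I u - 1) := by
        rw [RingHom.mapMatrix_apply, map_transvection, map_sub, _root_.map_one]
      have e3 : (Ideal.Quotient.mk I).mapMatrix (transvection i p (-z))
          = transvection i p (-(Ideal.Quotient.mk I z)) := by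
        rw [RingHom.mapMatrix_apply, map_transvection, map_neg]
      have e4 : (Ideal.Quotient.mk I).mapMatrix
          ((1 : Matrix (Fin n) (Fin n) R)
            + ∑ l ∈ Finset.univ.erase i, Matrix.single i l (z * w l))
          = (1 : Matrix (Fin n) (Fin n) (R ⧸ I)) + ∑ l ∈ Finset.univ.erase i,
              Matrix.single i l (Ideal.Quotient.mk I z * Ideal.Quotient.mk I (w l)) := by
        rw [RingHom.mapMatrix_apply, map_onePlusSum (g := fun _ => i) (h := fun l => l)]
        congr 1
        try exact Finset.sum_congr rfl fun l _ => by rw [_root_.map_mul]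
      have e5 : (Ideal.Quotient.mk I).mapMatrix
          ((1 : Matrix (Fin n) (Fin n) R)
            + ∑ l ∈ Finset.univ.erase i, Matrix.single l i (-(t l)))
          = (1 : Matrix (Fin n) (Fin n) (R ⧸ I)) + ∑ l ∈ Finset.univ.erase i,
              Matrix.single l i (-(Ideal.Quotient.mk I (t l))) := by
        rw [RingHom.mapMatrix_apply, map_onePlusSum (g := fun l => l) (h := fun _ => i)]
        congr 1
        try exact Finset.sum_congr rfl fun l _ => by rw [map_neg]
      rw [hB, _root_.map_mul, _root_.map_mul, _root_.map_mul, _root_.map_mul, e1, e2, e3, e4, e5]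
    have hmkzu : Ideal.Quotient.mk I z * Ideal.Quotient.mk I u = 1 := by
      rw [← _root_.map_mul]
      have : Ideal.Quotient.mk I (z * u) = Ideal.Quotient.mk I 1 := Ideal.Quotient.eq.2 hzI
      rw [this, _root_.map_one]
    have hmku : Ideal.Quotient.mk I u
        = (fun l => Ideal.Quotient.mk I (w l)) i
          + ∑ l ∈ Finset.univ.erase i,
              Ideal.Quotient.mk I (t l) * Ideal.Quotient.mk I (w l) := by
      simp only [hu, map_add, map_sum, _root_.map_mul]
    have hrow := row_formula i p hip (Ideal.Quotient.mk I u) (Ideal.Quotient.mk I z) hmkzu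
      (fun l => Ideal.Quotient.mk I (w l)) (fun l => Ideal.Quotient.mk I (t l)) hmku j
    rw [← expand] at hrow
    rw [RingHom.mapMatrix_apply, Matrix.map_apply] at hrow
    have hBwj : B i j - w j ∈ I := Ideal.Quotient.eq.1 hrow
    have : B i j - a j = (B i j - w j) + (w j - a j) := by ring
    rw [this]
    exact I.add_mem hBwj (hwI j)

lemma list_prod_single {M : Type*} [Monoid M] {α : Type*} [DecidableEq α]
    (f : α → M) (i : α) (h1 : ∀ j, j ≠ i → f j = 1) :
    ∀ l : List α, l.count i = 1 → (l.map f).prod = f i := by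
  intro l
  induction l with
  | nil => simp
  | cons x xs ih =>
    intro hc
    rw [List.map_cons, List.prod_cons]
    by_cases hx : x = i
    · subst hx
      rw [List.count_cons_self] at hc
      have h0 : xs.count x = 0 := by omega
      have : (xs.map f).prod = 1 := by
        refine List.prod_eq_one fun y hy => ?_
        obtain ⟨z, hz, rfl⟩ := List.mem_map.1 hy
        refine h1 z fun hzx => ?_
        subst hzx
        exact (List.count_eq_zero.1 h0) hz
      rw [this, mul_one]
    · rw [List.count_cons_of_ne hx] at hc
      rw [h1 x hx, one_mul]
      exact ih hc

lemma row_unital {n : ℕ} (A : Matrix (Fin n) (Fin n) R) (hA : A.det = 1) (i : Fin n) :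
    ∑ j, Ideal.span {A i j} = ⊤ := by
  rw [Ideal.eq_top_iff_one]
  have h1 : (1 : R) = ∑ j, A i j * A.adjugate j i := by
    have := congrFun (congrFun (Matrix.mul_adjugate A) i) i
    rw [hA] at this
    simp only [Matrix.smul_apply, Matrix.one_apply_eq, smul_eq_mul, mul_one] at this
    rw [← this, Matrix.mul_apply]
  rw [h1]
  refine Submodule.sum_mem _ fun j _ => ?_
  have hle : Ideal.span {A i j} ≤ ∑ j, Ideal.span {A i j} := by
    have := Finset.add_sum_erase Finset.univ (fun j => Ideal.span {A i j}) (Finset.mem_univ j)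
    rw [← this, Submodule.add_eq_sup]
    exact le_sup_left
  exact hle (Ideal.mul_mem_right _ _ (Ideal.mem_span_singleton_self _))

end RowMapHelpers

/-- Let `R` be a commutative ring with unity in which every non-Jacobson
element is contained in only finitely many maximal ideals. Let `I_0, …, I_k` be mutually
co-maximal ideals of `R`; if exactly one `I_j` is proper, assume moreover that this proper
ideal is contained in only finitely many maximal ideals. Let `m^i_j ∈ ℕ`. Then the row map
`SL_{k+1}(R) → ∏_{i=0}^{k} PF^{k,(m^i_0,…,m^i_k)}_{I_i}` is surjective: every tuple of
classes is the tuple of classes of the rows of some matrix in `SL_{k+1}(R)`. -/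
theorem rowMap_surjective {R : Type*} [CommRing R]
    (hnj : ∀ x : R, (∃ M : Ideal R, M.IsMaximal ∧ x ∉ M) →
      {M : Ideal R | M.IsMaximal ∧ x ∈ M}.Finite)
    (k : ℕ) (hk : 0 < k)
    (I : Fin (k + 1) → Ideal R)
    (hcomax : ∀ i j, i ≠ j → I i + I j = ⊤)
    (hone : ∀ j, I j ≠ ⊤ → (∀ i, i ≠ j → I i = ⊤) →
      {M : Ideal R | M.IsMaximal ∧ I j ≤ M}.Finite)
    (m : Fin (k + 1) → Fin (k + 1) → ℕ) :
    ∀ x : (i : Fin (k + 1)) → GenProjSpace R (m i) (I i),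
      ∃ A : Matrix.SpecialLinearGroup (Fin (k + 1)) R,
        ∃ h : ∀ i, IsUnitalVector (fun j => A.1 i j),
          ∀ i, Quot.mk (ProjRel R (m i) (I i)) ⟨fun j => A.1 i j, h i⟩ = x i := by
  classical
  intro x
  have hrep : ∀ i, ∃ v : {v : Fin (k+1) → R // IsUnitalVector v},
      Quot.mk (ProjRel R (m i) (I i)) v = x i := fun i => Quot.exists_rep (x i)
  choose a hax using hrep
  set Jp : Fin (k+1) → Ideal R := fun i => ∏ j ∈ Finset.univ.erase i, I j with hJp
  have hJple : ∀ i l, l ≠ i → Jp i ≤ I l := fun i l hl =>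
    Ideal.prod_le_inf.trans (Finset.inf_le (Finset.mem_erase.2 ⟨hl, Finset.mem_univ _⟩))
  have hco : ∀ i, I i + Jp i = ⊤ := by
    intro i
    have hcop : IsCoprime (I i) (Jp i) := IsCoprime.prod_right fun j hj =>
      (Ideal.isCoprime_iff_add).2 (by rw [Ideal.one_eq_top]; exact hcomax i j (Ne.symm (Finset.mem_erase.1 hj).1))
    rw [← Ideal.one_eq_top]
    exact (Ideal.isCoprime_iff_add).1 hcop
  have hFin : ∀ i, I i ≠ ⊤ → {M : Ideal R | M.IsMaximal ∧ I i ≤ M}.Finite := by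
    intro i hi
    by_cases hex : ∃ j, j ≠ i ∧ I j ≠ ⊤
    · obtain ⟨j, hji, hj⟩ := hex
      have hco2 : I i + I j = ⊤ := hcomax i j (Ne.symm hji)
      have h1m : (1:R) ∈ I i ⊔ I j := by
        rw [← Submodule.add_eq_sup, hco2]; exact Submodule.mem_top
      obtain ⟨α, hα, β, hβ, hαβ⟩ := Submodule.mem_sup.1 h1m
      obtain ⟨Mj, hMj, hMjle⟩ := Ideal.exists_le_maximal _ hj
      have hexM : ∃ M : Ideal R, M.IsMaximal ∧ α ∉ M :=
        ⟨Mj, hMj, fun hmem => hMj.ne_top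
          ((Ideal.eq_top_iff_one _).2 (hαβ ▸ Mj.add_mem hmem (hMjle hβ)))⟩
      refine Set.Finite.subset (hnj α hexM) ?_
      rintro M ⟨hM, hle⟩
      exact ⟨hM, hle hα⟩
    · push_neg at hex
      exact hone i hi (fun j hj => hex j hj)
  have claim : ∀ i : Fin (k+1), ∃ B : Matrix (Fin (k+1)) (Fin (k+1)) R, B.det = 1 ∧
      (∀ j l, B j l - (1 : Matrix (Fin (k+1)) (Fin (k+1)) R) j l ∈ Jp i) ∧
      (∀ j, B i j - (a i).1 j ∈ I i) := by
    intro i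
    by_cases hi : I i = ⊤
    · refine ⟨1, Matrix.det_one, ?_, ?_⟩
      · intro j l; simp
      · intro j; rw [hi]; exact Submodule.mem_top
    · obtain ⟨p, hip⟩ : ∃ p : Fin (k+1), i ≠ p := by
        by_cases h0 : i = ⟨0, by omega⟩
        · exact ⟨⟨1, by omega⟩, by rw [h0]; simp [Fin.ext_iff]⟩
        · exact ⟨⟨0, by omega⟩, h0⟩
      have hva : ∀ M : Ideal R, M.IsMaximal → I i ≤ M → ∃ j, (a i).1 j ∉ M := by
        intro M hM hle
        by_contra hall
        push_neg at hall
        have hsle := sum_span_le hall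
        rw [(a i).2] at hsle
        exact hM.ne_top (top_le_iff.1 hsle)
      exact completion i p hip (I i) (Jp i) (hco i) (hFin i hi) (a i).1 hva
  choose B hBdet hBJ hBI using claim
  set L : List (Matrix (Fin (k+1)) (Fin (k+1)) R) := (List.finRange (k+1)).map B with hL
  set A : Matrix (Fin (k+1)) (Fin (k+1)) R := L.prod with hA
  have hAdet : A.det = 1 := by
    have h := map_list_prod (Matrix.detMonoidHom) L
    rw [← hA] at h
    have h2 : Matrix.detMonoidHom A = A.det := congrFun Matrix.coe_detMonoidHom A
    rw [h2] at h
    rw [h]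
    refine List.prod_eq_one fun y hy => ?_
    obtain ⟨C, hC, rfl⟩ := List.mem_map.1 hy
    rw [hL] at hC
    obtain ⟨l, _, rfl⟩ := List.mem_map.1 hC
    have h3 : Matrix.detMonoidHom (B l) = (B l).det := congrFun Matrix.coe_detMonoidHom _
    rw [h3, hBdet]
  have hrowcong : ∀ i j, A i j - (a i).1 j ∈ I i := by
    intro i j
    set φ := (Ideal.Quotient.mk (I i)).mapMatrix (m := Fin (k+1)) with hφ
    have hφl : ∀ l, l ≠ i → φ (B l) = 1 := by
      intro l hl
      ext r s
      rw [hφ, RingHom.mapMatrix_apply, Matrix.map_apply]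
      have hmem : B l r s - (1 : Matrix (Fin (k+1)) (Fin (k+1)) R) r s ∈ I i :=
        (hJple l i (Ne.symm hl)) (hBJ l r s)
      rw [Ideal.Quotient.eq.2 hmem]
      by_cases hrs : r = s <;> simp [Matrix.one_apply, hrs]
    have hφA : φ A = φ (B i) := by
      rw [hA, map_list_prod φ L, hL, List.map_map]
      exact list_prod_single (fun l => φ (B l)) i hφl (List.finRange (k+1))
        (List.count_eq_one_of_mem (List.nodup_finRange _) (List.mem_finRange i))
    have hent := congrFun (congrFun hφA i) j
    rw [hφ, RingHom.mapMatrix_apply, Matrix.map_apply, RingHom.mapMatrix_apply,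
      Matrix.map_apply] at hent
    have h2 : A i j - B i i j ∈ I i := Ideal.Quotient.eq.1 hent
    have h4 : A i j - (a i).1 j = (A i j - B i i j) + (B i i j - (a i).1 j) := by ring
    rw [h4]
    exact (I i).add_mem h2 (hBI i j)
  have hu : ∀ i, IsUnitalVector (fun j => A i j) := fun i => row_unital A hAdet i
  refine ⟨⟨A, hAdet⟩, hu, ?_⟩
  intro i
  rw [← hax i]
  apply Quot.sound
  refine ⟨1, ?_, ?_⟩
  · rw [_root_.map_one]; exact isUnit_one
  · intro j
    simpa using hrowcong i j
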